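/- Let F_q be a finite field with q elements, K a field extension of F_q of degree m, b an ordered F_q-basis of K, and α a generator of the cyclic group K^×. Let M_α := ε_b(α·b) ∈ GL_m(F_q) and Q := ε_b(b^q) ∈ GL_m(F_q). Then: (1) M_α·Q = Q·M_α^q (q-th matrix power of M_α); (2) the cyclic subgroups ⟨M_α⟩ and ⟨Q⟩ of GL_m(F_q) intersect trivially; (3) the set K := ⟨M_α⟩·⟨Q⟩ is a subgroup of GL_m(F_q) of cardinality m·(q^m − 1), and K is the internal semidirect product ⟨M_α⟩ ⋊ ⟨Q⟩ with ⟨M_α⟩ normal in K. -/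

import Mathlib

open Matrix Pointwise
open scoped MatrixGroups

/-- Matrix expansion with respect to an ordered basis `b` of `K` over `F`. -/
noncomputable def expand {F K : Type*} [Field F] [Field K] [Algebra F K] {m l : ℕ}
    (b : Module.Basis (Fin m) F K) (x : Fin l → K) : Matrix (Fin l) (Fin m) F :=
  Matrix.of fun i j => b.repr (x i) j

/-- The `q`-power Frobenius as an `F`-linear endomorphism of `K`. -/
noncomputable def frobL (F K : Type*) [Field F] [Fintype F] [Field K] [Algebra F K] :
    K →ₗ[F] K where
  toFun x := x ^ Fintype.card F
  map_add' x y := by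
    obtain ⟨n, hp, hcard⟩ := FiniteField.card F (ringChar F)
    haveI : Fact (ringChar F).Prime := ⟨hp⟩
    haveI : CharP K (ringChar F) :=
      charP_of_injective_algebraMap (algebraMap F K).injective (ringChar F)
    rw [hcard]
    exact add_pow_char_pow x y (ringChar F) n
  map_smul' c x := by
    simp only [Algebra.smul_def, mul_pow, RingHom.id_apply]
    rw [← map_pow, FiniteField.pow_card]

lemma frobL_apply {F K : Type*} [Field F] [Fintype F] [Field K] [Algebra F K] (x : K) :
    frobL F K x = x ^ Fintype.card F := rfl

lemma frobL_pow_apply {F K : Type*} [Field F] [Fintype F] [Field K] [Algebra F K] (j : ℕ) (x : K) :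
    (frobL F K ^ j) x = x ^ Fintype.card F ^ j := by
  induction j with
  | zero => simp
  | succ j ih =>
    rw [pow_succ', Module.End.mul_apply, frobL_apply, ih, ← pow_mul, ← pow_succ]

lemma orderOf_transpose {n : Type*} [DecidableEq n] [Fintype n] {R : Type*} [CommRing R]
    (M : Matrix n n R) : orderOf Mᵀ = orderOf M := by
  rw [orderOf_eq_orderOf_iff]
  intro k
  rw [← Matrix.transpose_pow]
  constructor
  · intro h
    have := congrArg Matrix.transpose h
    simpa using this
  · intro h; rw [h, Matrix.transpose_one]

/-- **The subgroup generated by `M_α` and `Q`.**  Let `α` generate `K^×`, let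
`Mα = ε_b(α • b)` be the matrix of multiplication by `α` and `Q = ε_b(b^q)` the matrix of
the `q`-power Frobenius (as elements of `GL_m(F)`).  Then `Mα * Q = Q * Mα^q`, the cyclic
subgroups `⟨Mα⟩` and `⟨Q⟩` intersect trivially, and the product set `⟨Mα⟩ * ⟨Q⟩` is a
subgroup of `GL_m(F)` of cardinality `m * (q^m - 1)` in which `⟨Mα⟩` is normal (an
internal semidirect product `⟨Mα⟩ ⋊ ⟨Q⟩`). -/
theorem malpha_q_semidirect
    {F K : Type*} [Field F] [Fintype F] [Field K] [Fintype K] [Algebra F K] {m : ℕ}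
    (hm : Module.finrank F K = m) (b : Module.Basis (Fin m) F K)
    (α : Kˣ) (hα : ∀ g : Kˣ, g ∈ Subgroup.zpowers α)
    (Mα Q : GL (Fin m) F)
    (hMα : (Mα : Matrix (Fin m) (Fin m) F) = expand b (fun i => (α : K) * b i))
    (hQ : (Q : Matrix (Fin m) (Fin m) F) = expand b (fun i => b i ^ Fintype.card F)) :
    Mα * Q = Q * Mα ^ Fintype.card F ∧
    Subgroup.zpowers Mα ⊓ Subgroup.zpowers Q = ⊥ ∧
    ∃ H : Subgroup (GL (Fin m) F),
      (H : Set (GL (Fin m) F))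
        = (Subgroup.zpowers Mα : Set (GL (Fin m) F)) * (Subgroup.zpowers Q : Set (GL (Fin m) F)) ∧
      Nat.card H = m * (Fintype.card F ^ m - 1) ∧
      ((Subgroup.zpowers Mα).subgroupOf H).Normal := by
  classical
  set q := Fintype.card F with hq'
  set E := LinearMap.toMatrixAlgEquiv b with hE
  set L := Algebra.lmul F K with hL
  set f := frobL F K with hf
  -- rewritten forms of the hypotheses
  have hMα' : (Mα : Matrix (Fin m) (Fin m) F) = (E (L (α : K)))ᵀ := by
    rw [hMα]; ext i j
    simp [expand, Matrix.transpose_apply, LinearMap.toMatrixAlgEquiv_apply, hE, hL]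
  have hQ' : (Q : Matrix (Fin m) (Fin m) F) = (E f)ᵀ := by
    rw [hQ]; ext i j
    simp [expand, Matrix.transpose_apply, LinearMap.toMatrixAlgEquiv_apply, hE, hf, frobL_apply, hq']
  have hcomm : f * L (α : K) = L ((α : K) ^ q) * f := by
    apply LinearMap.ext; intro x
    simp [Module.End.mul_apply, hf, hL, frobL_apply, mul_pow, hq']
  -- powers of Mα and Q as matrices
  have hMαpow : ∀ i : ℕ, ((Mα ^ i : GL (Fin m) F) : Matrix (Fin m) (Fin m) F)
      = (E (L ((α : K) ^ i)))ᵀ := by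
    intro i
    rw [Units.val_pow_eq_pow_val, hMα', ← Matrix.transpose_pow, ← map_pow, ← map_pow]
  have hQpow : ∀ j : ℕ, ((Q ^ j : GL (Fin m) F) : Matrix (Fin m) (Fin m) F)
      = (E (f ^ j))ᵀ := by
    intro j
    rw [Units.val_pow_eq_pow_val, hQ', ← Matrix.transpose_pow, ← map_pow]
  -- Part (1)
  have h1 : Mα * Q = Q * Mα ^ q := by
    apply Units.ext
    rw [Units.val_mul, Units.val_mul, hMα', hQ', hMαpow q, ← Matrix.transpose_mul,
      ← Matrix.transpose_mul, ← _root_.map_mul, ← _root_.map_mul, hcomm]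
  -- basic numerics
  have hmpos : 0 < m := by
    have : Nonempty (Fin m) := b.index_nonempty
    exact Fin.pos_iff_nonempty.mpr this
  have hq1 : 1 < q := Fintype.one_lt_card
  have hcardK : Fintype.card K = q ^ m := by
    rw [Module.card_fintype b, Fintype.card_fin]
  -- injectivity transfer: equality of unit powers gives equality of endomorphisms
  have hinj : ∀ i j : ℕ, (Mα ^ i : GL (Fin m) F) = Q ^ j → L ((α : K) ^ i) = f ^ j := by
    intro i j h
    have := congrArg Units.val h
    rw [hMαpow, hQpow] at this
    have := congrArg Matrix.transpose this
    simp only [Matrix.transpose_transpose] at this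
    exact E.injective this
  -- order of Mα
  have hordα : orderOf α = q ^ m - 1 := by
    rw [orderOf_eq_card_of_forall_mem_zpowers hα, Nat.card_units, Nat.card_eq_fintype_card,
      hcardK]
  have hordMα : orderOf Mα = q ^ m - 1 := by
    have h1' : orderOf Mα = orderOf ((Mα : Matrix (Fin m) (Fin m) F)) := orderOf_units.symm
    rw [h1', hMα', orderOf_transpose]
    have : orderOf (E (L (α : K))) = orderOf ((α : K)) := by
      have hEL : Function.Injective (fun x : K => E (L x)) := by
        intro x y hxy
        exact Algebra.lmul_injective (E.injective hxy)
      exact orderOf_injective ((E : Module.End F K →* Matrix (Fin m) (Fin m) F).comp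
        (L : K →* Module.End F K)) hEL (α : K)
    rw [this, orderOf_units, hordα]
  -- order of Q
  have hordQ : orderOf Q = m := by
    rw [orderOf_eq_iff hmpos]
    constructor
    · apply Units.ext
      have : f ^ m = 1 := by
        apply LinearMap.ext; intro x
        rw [Module.End.one_apply, hf, frobL_pow_apply, ← hq', ← hcardK]
        exact FiniteField.pow_card x
      rw [hQpow m, this, _root_.map_one, Matrix.transpose_one, Units.val_one]
    · rintro j hjm hjpos hQj
      have hfj : f ^ j = 1 := by
        have := hinj 0 j (by simpa using hQj.symm)
        simpa using this.symm
      have hαj : (α : K) ^ (q ^ j) = (α : K) := by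
        have := congrArg (fun g => g (α : K)) hfj
        simpa [hf, frobL_pow_apply, ← hq'] using this
      have hqj1 : 1 ≤ q ^ j := Nat.one_le_pow _ _ (by omega)
      have hα1 : (α : K) ^ (q ^ j - 1) = 1 := by
        have hne : (α : K) ≠ 0 := Units.ne_zero α
        have : (α : K) ^ (q ^ j - 1) * (α : K) = 1 * (α : K) := by
          rw [one_mul, ← pow_succ, Nat.sub_add_cancel hqj1, hαj]
        exact mul_right_cancel₀ hne this
      have hαu : α ^ (q ^ j - 1) = 1 := by
        apply Units.ext; rw [Units.val_pow_eq_pow_val, hα1, Units.val_one]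
      have hdvd : q ^ m - 1 ∣ q ^ j - 1 := hordα ▸ orderOf_dvd_of_pow_eq_one hαu
      have hjpos' : 0 < q ^ j - 1 := by
        have : 2 ≤ q ^ j := le_trans hq1 (Nat.le_self_pow (by omega) q)
        omega
      have : q ^ m - 1 ≤ q ^ j - 1 := Nat.le_of_dvd hjpos' hdvd
      have hle : q ^ m ≤ q ^ j := by
        have h1m : 1 ≤ q ^ m := Nat.one_le_pow _ _ (by omega)
        omega
      have : m ≤ j := (Nat.pow_le_pow_iff_right hq1).mp hle
      omega
  haveI : Finite (GL (Fin m) F) := Finite.of_injective _ (fun _ _ h => Units.ext h)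
  -- Part (2)
  have h2 : Subgroup.zpowers Mα ⊓ Subgroup.zpowers Q = ⊥ := by
    rw [eq_bot_iff]
    intro x hx
    rw [Subgroup.mem_inf] at hx
    obtain ⟨hxA, hxB⟩ := hx
    obtain ⟨i, rfl⟩ := mem_powers_iff_mem_zpowers.mpr hxA
    obtain ⟨j, hj⟩ := mem_powers_iff_mem_zpowers.mpr hxB
    have hLf := hinj i j hj.symm
    have hα1 : (α : K) ^ i = 1 := by
      have := congrArg (fun g : Module.End F K => g (1 : K)) hLf
      simpa [hL, hf, frobL_pow_apply] using this
    have : Mα ^ i = 1 := by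
      apply Units.ext
      rw [hMαpow i, hα1, _root_.map_one, _root_.map_one, Matrix.transpose_one, Units.val_one]
    exact Subgroup.mem_bot.mpr this
  -- conjugation facts
  have hQm : Q ^ m = 1 := by have := pow_orderOf_eq_one Q; rwa [hordQ] at this
  have rel : Q⁻¹ * Mα * Q = Mα ^ q := by rw [mul_assoc, h1, inv_mul_cancel_left]
  have cQinv : ∀ y ∈ Subgroup.zpowers Mα, Q⁻¹ * y * Q ∈ Subgroup.zpowers Mα := by
    intro y hy
    obtain ⟨k, rfl⟩ := Subgroup.mem_zpowers_iff.mp hy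
    have hcz := conj_zpow (i := k) (a := Q⁻¹) (b := Mα)
    rw [inv_inv] at hcz
    rw [← hcz, rel]
    exact Subgroup.zpow_mem _ (Subgroup.pow_mem _ (Subgroup.mem_zpowers Mα) q) k
  have cQinvPow : ∀ j : ℕ, ∀ y ∈ Subgroup.zpowers Mα,
      (Q ^ j)⁻¹ * y * Q ^ j ∈ Subgroup.zpowers Mα := by
    intro j
    induction j with
    | zero => intro y hy; simpa using hy
    | succ j ih =>
      intro y hy
      have heq : (Q ^ (j + 1))⁻¹ * y * Q ^ (j + 1) = Q⁻¹ * ((Q ^ j)⁻¹ * y * Q ^ j) * Q := by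
        rw [pow_succ]; group
      rw [heq]
      exact cQinv _ (ih y hy)
  have hconj : ∀ x ∈ Subgroup.zpowers Q, ∀ y ∈ Subgroup.zpowers Mα,
      x * y * x⁻¹ ∈ Subgroup.zpowers Mα := by
    intro x hx y hy
    obtain ⟨j, rfl⟩ := mem_powers_iff_mem_zpowers.mpr hx
    have hk1 : Q ^ (m * j - j) * Q ^ j = 1 := by
      rw [← pow_add, Nat.sub_add_cancel (Nat.le_mul_of_pos_left j hmpos), pow_mul, hQm, one_pow]
    have h2' : (Q ^ j)⁻¹ = Q ^ (m * j - j) := (eq_inv_of_mul_eq_one_left hk1).symm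
    have h3' : Q ^ j = (Q ^ (m * j - j))⁻¹ := eq_inv_of_mul_eq_one_right hk1
    show Q ^ j * y * (Q ^ j)⁻¹ ∈ Subgroup.zpowers Mα
    rw [h2', h3']
    exact cQinvPow (m * j - j) y hy
  have hAconj : ∀ a ∈ Subgroup.zpowers Mα, ∀ y ∈ Subgroup.zpowers Mα,
      a * y * a⁻¹ ∈ Subgroup.zpowers Mα := by
    intro a ha y hy
    obtain ⟨i, rfl⟩ := Subgroup.mem_zpowers_iff.mp ha
    obtain ⟨k, rfl⟩ := Subgroup.mem_zpowers_iff.mp hy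
    have : Mα ^ i * Mα ^ k * (Mα ^ i)⁻¹ = Mα ^ k := by group
    rw [this]
    exact Subgroup.zpow_mem _ (Subgroup.mem_zpowers Mα) k
  -- the subgroup H
  let H : Subgroup (GL (Fin m) F) :=
    { carrier := (Subgroup.zpowers Mα : Set (GL (Fin m) F)) * (Subgroup.zpowers Q : Set _)
      one_mem' := by
        simpa using Set.mul_mem_mul (SetLike.mem_coe.mpr (Subgroup.one_mem (Subgroup.zpowers Mα)))
          (SetLike.mem_coe.mpr (Subgroup.one_mem (Subgroup.zpowers Q)))
      mul_mem' := by
        rintro x y ⟨a1, ha1, b1, hb1, rfl⟩ ⟨a2, ha2, b2, hb2, rfl⟩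
        have ha1' : a1 ∈ Subgroup.zpowers Mα := ha1
        have ha2' : a2 ∈ Subgroup.zpowers Mα := ha2
        have hb1' : b1 ∈ Subgroup.zpowers Q := hb1
        have hb2' : b2 ∈ Subgroup.zpowers Q := hb2
        have heq : a1 * b1 * (a2 * b2) = a1 * (b1 * a2 * b1⁻¹) * (b1 * b2) := by group
        rw [heq]
        exact Set.mul_mem_mul (mul_mem ha1' (hconj b1 hb1' a2 ha2')) (mul_mem hb1' hb2')
      inv_mem' := by
        rintro x ⟨a, ha, c, hc, rfl⟩
        have ha' : a ∈ Subgroup.zpowers Mα := ha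
        have hc' : c ∈ Subgroup.zpowers Q := hc
        have hmem := hconj c⁻¹ (inv_mem hc') a⁻¹ (inv_mem ha')
        rw [inv_inv] at hmem
        have heq : (a * c)⁻¹ = c⁻¹ * a⁻¹ * c * c⁻¹ := by group
        rw [heq]
        exact Set.mul_mem_mul hmem (SetLike.mem_coe.mpr (inv_mem hc')) }
  have hHmem : ∀ x : GL (Fin m) F, x ∈ H ↔
      x ∈ (Subgroup.zpowers Mα : Set (GL (Fin m) F)) * (Subgroup.zpowers Q : Set _) :=
    fun _ => Iff.rfl
  refine ⟨h1, h2, H, rfl, ?_, ?_⟩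
  · -- cardinality
    have e : (↥(Subgroup.zpowers Mα) × ↥(Subgroup.zpowers Q)) ≃ ↥H := by
      apply Equiv.ofBijective (fun p => (⟨(p.1 : GL (Fin m) F) * (p.2 : GL (Fin m) F),
        Set.mul_mem_mul (SetLike.mem_coe.mpr p.1.2) (SetLike.mem_coe.mpr p.2.2)⟩ : ↥H))
      constructor
      · rintro ⟨⟨a1, ha1⟩, ⟨c1, hc1⟩⟩ ⟨⟨a2, ha2⟩, ⟨c2, hc2⟩⟩ hp
        have hv : a1 * c1 = a2 * c2 := congrArg Subtype.val hp
        have hkey : a2⁻¹ * a1 = c2 * c1⁻¹ := by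
          rw [← mul_inv_eq_one] at hv ⊢
          calc a2⁻¹ * a1 * (c2 * c1⁻¹)⁻¹ = a2⁻¹ * (a1 * c1 * (a2 * c2)⁻¹) * a2 := by group
            _ = 1 := by rw [hv]; group
        have hmemA : a2⁻¹ * a1 ∈ Subgroup.zpowers Mα := mul_mem (inv_mem ha2) ha1
        have hmemB : a2⁻¹ * a1 ∈ Subgroup.zpowers Q := by
          rw [hkey]; exact mul_mem hc2 (inv_mem hc1)
        have hmem : a2⁻¹ * a1 ∈ Subgroup.zpowers Mα ⊓ Subgroup.zpowers Q :=
          Subgroup.mem_inf.mpr ⟨hmemA, hmemB⟩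
        rw [h2, Subgroup.mem_bot] at hmem
        have ha : a1 = a2 := by
          have := hmem
          rw [inv_mul_eq_one] at this
          exact this.symm
        have hc : c1 = c2 := by
          have h0 : c2 * c1⁻¹ = 1 := by rw [← hkey]; exact hmem
          rw [mul_inv_eq_one] at h0
          exact h0.symm
        simp [Prod.ext_iff, Subtype.ext_iff, ha, hc]
      · rintro ⟨x, hx⟩
        obtain ⟨a, ha, c, hc, rfl⟩ := hx
        exact ⟨(⟨a, ha⟩, ⟨c, hc⟩), rfl⟩
    rw [← Nat.card_congr e, Nat.card_prod, Nat.card_zpowers, Nat.card_zpowers, hordMα, hordQ,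
      mul_comm]
  · -- normality
    refine ⟨?_⟩
    intro n hn g
    rw [Subgroup.mem_subgroupOf] at hn ⊢
    obtain ⟨a, ha, c, hc, hac⟩ := g.2
    have hcoe : ((g * n * g⁻¹ : H) : GL (Fin m) F)
        = a * (c * (n : GL (Fin m) F) * c⁻¹) * a⁻¹ := by
      push_cast
      rw [← hac]
      group
    rw [hcoe]
    exact hAconj a ha _ (hconj c hc _ hn)
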